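/- Let k ≥ 1 and let f_1, g_1, …, f_k, g_k : ℝ → ℝ be differentiable functions with f_i'(y) ≤ 0 and g_i'(y) ≤ 0 for all i and all y. Define π_b(y) = φ_{1,b} ∘ g_1 ∘ φ_{2,b} ∘ g_2 ∘ ⋯ ∘ φ_{k,b} ∘ g_k (y), where φ_{i,b}(y) = f_i(y − b) + b. Then for every y and b, the partial derivative ∂π_b(y)/∂b is at least 1. -/

import Mathlib

/-- The perturbed first return map: composition of the `k` steps
`y ↦ φ_{i,b}(g_i(y)) = f_i(g_i(y) - b) + b`. -/
noncomputable def piMap (f g : ℕ → ℝ → ℝ) (b : ℝ) : ℕ → ℝ → ℝ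
  | 0, y => y
  | k + 1, y => f k (g k (piMap f g b k y) - b) + b

lemma piMap_key (f g : ℕ → ℝ → ℝ)
    (hf : ∀ i, Differentiable ℝ (f i)) (hg : ∀ i, Differentiable ℝ (g i))
    (hf' : ∀ i y, deriv (f i) y ≤ 0) (hg' : ∀ i y, deriv (g i) y ≤ 0)
    (y b : ℝ) :
    ∀ k : ℕ, ∃ d : ℝ, HasDerivAt (fun b' => piMap f g b' k y) d b ∧ 0 ≤ d ∧
      (1 ≤ k → 1 ≤ d) := by
  intro k
  induction k with
  | zero =>
    exact ⟨0, by simpa [piMap] using hasDerivAt_const b y, le_refl 0, by omega⟩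
  | succ k ih =>
    obtain ⟨d, hd, hd0, _⟩ := ih
    set u := piMap f g b k y with hu
    have h1 : HasDerivAt (fun b' => g k (piMap f g b' k y)) (deriv (g k) u * d) b :=
      ((hg k u).hasDerivAt).comp b hd
    have h2 : HasDerivAt (fun b' => g k (piMap f g b' k y) - b')
        (deriv (g k) u * d - 1) b := h1.sub (hasDerivAt_id b)
    set a := g k u - b with ha
    have h3 : HasDerivAt (fun b' => f k (g k (piMap f g b' k y) - b'))
        (deriv (f k) a * (deriv (g k) u * d - 1)) b :=
      ((hf k a).hasDerivAt).comp b h2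
    have h4 : HasDerivAt (fun b' => piMap f g b' (k + 1) y)
        (deriv (f k) a * (deriv (g k) u * d - 1) + 1) b := by
      have e : (fun b' => piMap f g b' (k + 1) y) =
          (fun b' => f k (g k (piMap f g b' k y) - b')) + fun b' => b' := by
        funext b'; simp [piMap]
      rw [e]; exact h3.add (hasDerivAt_id' b)
    have hprod : 0 ≤ deriv (f k) a * (deriv (g k) u * d - 1) := by
      have h5 : deriv (g k) u * d ≤ 0 := mul_nonpos_of_nonpos_of_nonneg (hg' k u) hd0
      have h6 : deriv (g k) u * d - 1 ≤ 0 := by linarith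
      nlinarith [hf' k a]
    exact ⟨_, h4, by linarith, fun _ => by linarith⟩

theorem stmt_6 (k : ℕ) (hk : 1 ≤ k) (f g : ℕ → ℝ → ℝ)
    (hf : ∀ i, Differentiable ℝ (f i)) (hg : ∀ i, Differentiable ℝ (g i))
    (hf' : ∀ i y, deriv (f i) y ≤ 0) (hg' : ∀ i y, deriv (g i) y ≤ 0) :
    ∀ y b : ℝ, 1 ≤ deriv (fun b' => piMap f g b' k y) b := by
  intro y b
  obtain ⟨d, hd, _, h1⟩ := piMap_key f g hf hg hf' hg' y b k
  rw [hd.deriv]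
  exact h1 hk
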